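/- For every real α with 0 < α < π/2 and every real r with −1 ≤ r < 1, one has cos α · arccos( r·cos α / √(1 − r²·sin²α) ) < arccos r. (This is the positivity of the paper's time difference δT_b, proving Proposition 1 in the case r⁻_y·r⁺_y < 0: the equatorial singular arc is strictly slower than the bang-singular detour.) -/

import Mathlib

set_option maxHeartbeats 1000000

open Real

/-- Positivity of the time difference `δT_b` (Proposition 1, case `r⁻_y · r⁺_y < 0`):
the equatorial singular arc is strictly slower than the bang-singular detour. -/
theorem deltaTb_pos (α r : ℝ) (hα₀ : 0 < α) (hα₁ : α < π / 2)
    (hr₀ : -1 ≤ r) (hr₁ : r < 1) :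
    cos α * arccos (r * cos α / Real.sqrt (1 - r ^ 2 * sin α ^ 2)) < arccos r := by
  set c := cos α with hc_def
  set s := sin α with hs_def
  have hc : 0 < c := Real.cos_pos_of_mem_Ioo ⟨by linarith [pi_pos], hα₁⟩
  have hs : 0 < s := Real.sin_pos_of_pos_of_lt_pi hα₀ (by linarith [pi_pos])
  have hpyth : s ^ 2 + c ^ 2 = 1 := sin_sq_add_cos_sq α
  have hs1 : s < 1 := by nlinarith
  have hc1 : c < 1 := by nlinarith
  set F : ℝ → ℝ := fun x => arccos x - c * arccos (x * c / Real.sqrt (1 - x ^ 2 * s ^ 2))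
    with hF_def
  -- denominator positivity on [-1,1]
  have hDpos : ∀ x : ℝ, x ∈ Set.Icc (-1 : ℝ) 1 → 0 < 1 - x ^ 2 * s ^ 2 := by
    intro x hx
    have h1 := hx.1; have h2 := hx.2
    have hxx : x ^ 2 ≤ 1 := by nlinarith
    nlinarith [mul_le_mul_of_nonneg_right hxx (sq_nonneg s)]
  have hcont : ContinuousOn F (Set.Icc (-1 : ℝ) 1) := by
    apply ContinuousOn.sub
    · exact Real.continuous_arccos.continuousOn
    · apply ContinuousOn.mul continuousOn_const
      apply Real.continuous_arccos.comp_continuousOn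
      apply ContinuousOn.div
      · exact (continuous_id.mul continuous_const).continuousOn
      · exact (Real.continuous_sqrt.comp (by continuity)).continuousOn
      · intro x hx
        exact (Real.sqrt_pos.mpr (hDpos x hx)).ne'
  have hanti : StrictAntiOn F (Set.Icc (-1 : ℝ) 1) := by
    apply strictAntiOn_of_deriv_neg (convex_Icc _ _) hcont
    intro x hx
    rw [interior_Icc] at hx
    have hx1 : -1 < x := hx.1
    have hx2 : x < 1 := hx.2
    have hx2' : x ^ 2 < 1 := by nlinarith
    set D : ℝ := 1 - x ^ 2 * s ^ 2 with hD_def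
    have hD : 0 < D := by nlinarith [sq_nonneg x, sq_nonneg s]
    have hDc : c ^ 2 < D := by
      have := mul_pos (pow_pos hs 2) (by nlinarith : (0:ℝ) < 1 - x ^ 2)
      nlinarith
    set sD : ℝ := Real.sqrt D with hsD_def
    have hsD : 0 < sD := Real.sqrt_pos.mpr hD
    have hsD2 : sD ^ 2 = D := Real.sq_sqrt hD.le
    set sx : ℝ := Real.sqrt (1 - x ^ 2) with hsx_def
    have hsx : 0 < sx := Real.sqrt_pos.mpr (by nlinarith)
    have hsx2 : sx ^ 2 = 1 - x ^ 2 := Real.sq_sqrt (by nlinarith)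
    set h : ℝ := x * c / sD with hh_def
    have hh2 : 1 - h ^ 2 = (1 - x ^ 2) / D := by
      rw [hh_def, div_pow, hsD2]
      rw [eq_div_iff hD.ne', sub_mul, div_mul_cancel₀ _ hD.ne', hD_def]
      linear_combination (-(x ^ 2)) * hpyth
    have hhlt : h ^ 2 < 1 := by
      have : (0:ℝ) < (1 - x ^ 2) / D := div_pos (by nlinarith) hD
      nlinarith
    have hhne1 : h ≠ 1 := (by nlinarith : h < 1).ne
    have hhne1' : h ≠ -1 := (by nlinarith : -1 < h).ne'
    -- sqrt of 1 - h^2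
    have hsqh : Real.sqrt (1 - h ^ 2) = sx / sD := by
      rw [hh2, Real.sqrt_div (by nlinarith) D, ← hsx_def, ← hsD_def]
    -- derivative of inner denominator function
    have hder_inner : HasDerivAt (fun t : ℝ => Real.sqrt (1 - t ^ 2 * s ^ 2))
        (1 / (2 * sD) * (-(2 * x) * s ^ 2)) x := by
      have h1 : HasDerivAt (fun t : ℝ => 1 - t ^ 2 * s ^ 2) (-(2 * x) * s ^ 2) x := by
        have := ((hasDerivAt_pow 2 x).mul_const (s ^ 2)).const_sub 1
        simpa using this.congr_deriv (by ring)
      have h2 := (Real.hasDerivAt_sqrt hD.ne').comp x h1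
      simpa [Function.comp_def, hsD_def, hD_def, mul_comm] using h2
    -- derivative of h
    have hder_h : HasDerivAt (fun t : ℝ => t * c / Real.sqrt (1 - t ^ 2 * s ^ 2))
        ((c * sD - x * c * (1 / (2 * sD) * (-(2 * x) * s ^ 2))) / sD ^ 2) x := by
      have hnum : HasDerivAt (fun t : ℝ => t * c) c x := by
        simpa using (hasDerivAt_id x).mul_const c
      exact hnum.div hder_inner hsD.ne'
    have hder_ac : HasDerivAt (fun t : ℝ => arccos (t * c / Real.sqrt (1 - t ^ 2 * s ^ 2)))
        (-(1 / Real.sqrt (1 - h ^ 2)) *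
          ((c * sD - x * c * (1 / (2 * sD) * (-(2 * x) * s ^ 2))) / sD ^ 2)) x := by
      have := (Real.hasDerivAt_arccos hhne1' hhne1).comp x hder_h
      simpa [Function.comp_def, hh_def] using this
    have hder_F : HasDerivAt F
        (-(1 / sx) - c * (-(1 / Real.sqrt (1 - h ^ 2)) *
          ((c * sD - x * c * (1 / (2 * sD) * (-(2 * x) * s ^ 2))) / sD ^ 2))) x := by
      have h1 := Real.hasDerivAt_arccos (by linarith : x ≠ -1) (by linarith : x ≠ 1)
      rw [← hsx_def] at h1
      exact h1.sub (hder_ac.const_mul c)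
    rw [hder_F.deriv, hsqh]
    -- show the derivative is negative
    have h1 : sD ^ 2 + x ^ 2 * s ^ 2 = 1 := by rw [hsD2, hD_def]; ring
    have hval : c * sD - x * c * (1 / (2 * sD) * (-(2 * x) * s ^ 2)) = c / sD := by
      field_simp
      linear_combination h1
    rw [hval]
    have e1 : -(1 / (sx / sD)) * (c / sD / sD ^ 2) = -(c / (sx * sD ^ 2)) := by
      field_simp
    rw [e1]
    have e2 : c * (c / (sx * sD ^ 2)) = c ^ 2 / (sx * sD ^ 2) := by ring
    have : c ^ 2 / (sx * sD ^ 2) < 1 / sx := by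
      rw [div_lt_div_iff₀ (by positivity) hsx]
      nlinarith [mul_lt_mul_of_pos_left hDc hsx, hsD2]
    linarith [e2 ▸ this]
  -- conclude: F 1 = 0 and F r > F 1
  have hF1 : F 1 = 0 := by
    have harg : (1:ℝ) * c / Real.sqrt (1 - 1 ^ 2 * s ^ 2) = 1 := by
      rw [show (1:ℝ) - 1 ^ 2 * s ^ 2 = c ^ 2 by nlinarith]
      rw [Real.sqrt_sq hc.le]
      field_simp
    show arccos 1 - c * arccos ((1:ℝ) * c / Real.sqrt (1 - 1 ^ 2 * s ^ 2)) = 0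
    rw [harg, Real.arccos_one]; ring
  have hmem1 : r ∈ Set.Icc (-1 : ℝ) 1 := ⟨hr₀, hr₁.le⟩
  have hmem2 : (1:ℝ) ∈ Set.Icc (-1 : ℝ) 1 := by norm_num
  have := hanti hmem1 hmem2 hr₁
  rw [hF1] at this
  have : 0 < F r := this
  rw [hF_def] at this
  simp only at this
  linarith
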